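/- For l ≥ 1 and v ∈ ℤ_p^×, suppose W: GL₂(ℚ_p) → ℂ satisfies W(n(x)g) = ψ_p(x)W(g) for x ∈ ℚ_p, W(z(λ)g) = ω(λ)W(g) for λ ∈ ℚ_p^×, and W(gk) = W(g) for k ∈ K with K containing [[v⁻²,0],[v⁻¹p^l,1]] (e.g. l ≥ v_p of the level). Then W(g_{t,l,v}) = ψ_p(-v⁻¹p^{t+l})·ω(-v p^{-l})·W(a(p^{t+2l})). -/

import Mathlib

open Matrix

/-- If `W : GL₂(ℚ_p) → ℂ` transforms by `ψ_p` under left translation by `n(x)`, by a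
central character `ω` under the centre, and is right invariant under a subgroup
containing `[[v⁻²,0],[v⁻¹p^l,1]]`, then for `l ≥ 1` and `v ∈ ℤ_pˣ` one has
`W(g_{t,l,v}) = ψ_p(-v⁻¹p^{t+l})·ω(-v p^{-l})·W(a(p^{t+2l}))`. -/
theorem whittaker_value (p : ℕ) [Fact p.Prime] (t l : ℤ) (hl : 1 ≤ l) (v : ℤ_[p]ˣ)
    (W : Matrix (Fin 2) (Fin 2) ℚ_[p] → ℂ) (ψ : ℚ_[p] → ℂ) (ω : ℚ_[p] → ℂ)
    (hN : ∀ (x : ℚ_[p]) (g : Matrix (Fin 2) (Fin 2) ℚ_[p]),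
      W (!![1, x; 0, 1] * g) = ψ x * W g)
    (hZ : ∀ (lam : ℚ_[p]) (g : Matrix (Fin 2) (Fin 2) ℚ_[p]), lam ≠ 0 →
      W (Matrix.scalar (Fin 2) lam * g) = ω lam * W g)
    (hK : ∀ g : Matrix (Fin 2) (Fin 2) ℚ_[p],
      W (g * !![(((v⁻¹ : ℤ_[p]ˣ) : ℤ_[p]) : ℚ_[p]) ^ 2, 0;
                (((v⁻¹ : ℤ_[p]ˣ) : ℤ_[p]) : ℚ_[p]) * (p : ℚ_[p]) ^ l, 1]) = W g) :
    W (!![(p : ℚ_[p]) ^ t, 0; 0, 1] * !![0, 1; -1, 0] *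
        !![1, ((v : ℤ_[p]) : ℚ_[p]) * (p : ℚ_[p]) ^ (-l); 0, 1])
      = ψ (-(((v⁻¹ : ℤ_[p]ˣ) : ℤ_[p]) : ℚ_[p]) * (p : ℚ_[p]) ^ (t + l)) *
        (ω (-(((v : ℤ_[p]) : ℚ_[p]) * (p : ℚ_[p]) ^ (-l))) *
          W !![(p : ℚ_[p]) ^ (t + 2 * l), 0; 0, 1]) := by
  set u : ℚ_[p] := ((v : ℤ_[p]) : ℚ_[p]) with hu
  set ui : ℚ_[p] := (((v⁻¹ : ℤ_[p]ˣ) : ℤ_[p]) : ℚ_[p]) with hui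
  have hp0 : (p : ℚ_[p]) ≠ 0 := Nat.cast_ne_zero.mpr (Fact.out (p := p.Prime)).ne_zero
  have huui : u * ui = 1 := by
    rw [hu, hui, ← PadicInt.coe_mul, ← Units.val_mul, mul_inv_cancel]
    simp
  have hu0 : u ≠ 0 := left_ne_zero_of_mul_eq_one huui
  have hlam : -(u * (p : ℚ_[p]) ^ (-l)) ≠ 0 := by
    simp [hu0, zpow_ne_zero, hp0]
  have key : !![(p : ℚ_[p]) ^ t, 0; 0, 1] * !![0, 1; -1, 0] *
        !![1, u * (p : ℚ_[p]) ^ (-l); 0, 1]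
      = Matrix.scalar (Fin 2) (-(u * (p : ℚ_[p]) ^ (-l))) *
        (!![1, -ui * (p : ℚ_[p]) ^ (t + l); 0, 1] *
          (!![(p : ℚ_[p]) ^ (t + 2 * l), 0; 0, 1] *
            !![ui ^ 2, 0; ui * (p : ℚ_[p]) ^ l, 1])) := by
    have hsc : Matrix.scalar (Fin 2) (-(u * (p : ℚ_[p]) ^ (-l)))
        = !![-(u * (p : ℚ_[p]) ^ (-l)), 0; 0, -(u * (p : ℚ_[p]) ^ (-l))] := by
      ext i j
      fin_cases i <;> fin_cases j <;>
        simp [Matrix.scalar_apply, Matrix.diagonal]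
    rw [hsc]
    ext i j
    fin_cases i <;> fin_cases j <;>
      simp only [Matrix.mul_apply, Fin.sum_univ_two, cons_val', cons_val_zero,
        cons_val_one, head_cons, head_fin_const, empty_val', cons_val_fin_one,
        mul_zero, zero_mul, mul_one, one_mul, add_zero, zero_add, neg_mul, neg_neg,
        Fin.zero_eta, Fin.mk_one, Fin.isValue, of_apply] <;>
      try field_simp
    · -- (0,0) entry
      simp only [two_mul, zpow_add₀ hp0]
      ring
    · -- (0,1) entry
      have hc : (p : ℚ_[p]) ^ l * ((p : ℚ_[p]) ^ l)⁻¹ = 1 :=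
        mul_inv_cancel₀ (zpow_ne_zero l hp0)
      simp only [zpow_add₀ hp0, _root_.zpow_neg]
      linear_combination (-(p : ℚ_[p]) ^ t * (p : ℚ_[p]) ^ l * ((p : ℚ_[p]) ^ l)⁻¹) * huui
        + (-(p : ℚ_[p]) ^ t) * hc
    · -- (1,0) entry
      have hc : (p : ℚ_[p]) ^ l * ((p : ℚ_[p]) ^ l)⁻¹ = 1 :=
        mul_inv_cancel₀ (zpow_ne_zero l hp0)
      simp only [_root_.zpow_neg]
      linear_combination ((p : ℚ_[p]) ^ l * ((p : ℚ_[p]) ^ l)⁻¹) * huui + hc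
  rw [key, hZ _ _ hlam, hN, hK]
  ring
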